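/- arXiv:1704.02585 — 2 statements merged into one kernel-verified Lean document; each statement's English description precedes it below -/
import Mathlib

section
/- (Dual Sylvester identity) Let X be a matrix, K and K' sequences of row and column indices of equal length, and J = (j_1,…,j_q), J' = (j'_1,…,j'_q) sequences of row and column indices. Then det( det X((J∖(j_α))⊔K ; (J'∖(j'_β))⊔K') )_{1≤α,β≤q} = (det X(J⊔K ; J'⊔K'))^{q−1} · det X(K ; K'). -/
open Matrix Finset


lemma part1 {R : Type*} [CommRing R] {q r : ℕ}
    (Y : Matrix (Fin (q+1) ⊕ Fin r) (Fin (q+1) ⊕ Fin r) R) :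
    Y.det * ((Y.adjugate.submatrix Sum.inl Sum.inl).det) =
      Y.det ^ (q+1) * (Y.submatrix Sum.inr Sum.inr).det := by
  set B := Y.adjugate with hB
  have hN : Y * (fromBlocks (B.submatrix Sum.inl Sum.inl) 0
      (B.submatrix Sum.inr Sum.inl) 1) =
      fromBlocks (Y.det • 1) (Y.submatrix Sum.inl Sum.inr) 0 (Y.submatrix Sum.inr Sum.inr) := by
    have key : ∀ i j, ∑ k, Y i k * B k j = (Y.det • (1 : Matrix _ _ R)) i j := by
      intro i j; rw [← mul_apply, Y.mul_adjugate]
    ext i j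
    rcases j with j | j
    · have := key i (Sum.inl j)
      rcases i with i | i <;>
        simpa [mul_apply, Fintype.sum_sum_type, Matrix.one_apply] using this
    · rcases i with i | i <;>
        simp [mul_apply, Fintype.sum_sum_type, Matrix.one_apply, Finset.mul_sum]
  calc Y.det * ((B.submatrix Sum.inl Sum.inl).det)
      = Y.det * (fromBlocks (B.submatrix Sum.inl Sum.inl) 0
          (B.submatrix Sum.inr Sum.inl) 1).det := by
        rw [det_fromBlocks_zero₁₂, det_one, mul_one]
    _ = (Y * (fromBlocks (B.submatrix Sum.inl Sum.inl) 0
          (B.submatrix Sum.inr Sum.inl) 1)).det := (det_mul _ _).symm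
    _ = (fromBlocks (Y.det • 1) (Y.submatrix Sum.inl Sum.inr) 0
          (Y.submatrix Sum.inr Sum.inr)).det := by rw [hN]
    _ = (Y.det • (1 : Matrix (Fin (q+1)) (Fin (q+1)) R)).det *
          (Y.submatrix Sum.inr Sum.inr).det := det_fromBlocks_zero₂₁ _ _ _
    _ = Y.det ^ (q+1) * (Y.submatrix Sum.inr Sum.inr).det := by
        rw [det_smul, det_one, mul_one, Fintype.card_fin]

lemma jacobi {R : Type*} [CommRing R] {q r : ℕ}
    (Y : Matrix (Fin (q+1) ⊕ Fin r) (Fin (q+1) ⊕ Fin r) R) :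
    (Y.adjugate.submatrix Sum.inl Sum.inl).det =
      Y.det ^ q * (Y.submatrix Sum.inr Sum.inr).det := by
  let A' := mvPolynomialX (Fin (q+1) ⊕ Fin r) (Fin (q+1) ⊕ Fin r) ℤ
  have key : (A'.adjugate.submatrix Sum.inl Sum.inl).det =
      A'.det ^ q * (A'.submatrix Sum.inr Sum.inr).det := by
    apply mul_left_cancel₀ (det_mvPolynomialX_ne_zero _ ℤ)
    rw [part1]; ring
  have hmap := congrArg (MvPolynomial.aeval
      (fun p : ((Fin (q+1) ⊕ Fin r) × (Fin (q+1) ⊕ Fin r)) => Y p.1 p.2)) key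
  let f := (MvPolynomial.aeval
      (fun p : ((Fin (q+1) ⊕ Fin r) × (Fin (q+1) ⊕ Fin r)) => Y p.1 p.2) :
      MvPolynomial _ ℤ →ₐ[ℤ] R)
  have hY : f.mapMatrix A' = Y := mvPolynomialX_mapMatrix_aeval ℤ Y
  calc (Y.adjugate.submatrix Sum.inl Sum.inl).det
      = (((f.mapMatrix A').adjugate).submatrix Sum.inl Sum.inl).det := by rw [hY]
    _ = (((f.mapMatrix A'.adjugate)).submatrix Sum.inl Sum.inl).det := by
        rw [AlgHom.map_adjugate]
    _ = ((A'.adjugate.map f).submatrix Sum.inl Sum.inl).det := by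
        rw [AlgHom.mapMatrix_apply]
    _ = ((A'.adjugate.submatrix Sum.inl Sum.inl).map f).det := by
        rw [submatrix_map]
    _ = f ((A'.adjugate.submatrix Sum.inl Sum.inl).det) := (f.map_det _).symm
    _ = f (A'.det ^ q * (A'.submatrix Sum.inr Sum.inr).det) := by rw [key]
    _ = Y.det ^ q * (Y.submatrix Sum.inr Sum.inr).det := by
        rw [_root_.map_mul, map_pow, f.map_det, f.map_det,
          show f.mapMatrix (A'.submatrix Sum.inr Sum.inr)
            = (f.mapMatrix A').submatrix Sum.inr Sum.inr from rfl, hY]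


lemma entry {R : Type*} [CommRing R] {q r : ℕ}
    (Y : Matrix (Fin (q+1) ⊕ Fin r) (Fin (q+1) ⊕ Fin r) R) (α β : Fin (q+1)) :
    (Y.submatrix (Sum.map α.succAbove id) (Sum.map β.succAbove id)).det
      = (-1 : R) ^ ((α : ℕ) + (β : ℕ)) * Y.adjugate (Sum.inl β) (Sum.inl α) := by
  have h : q + r + 1 = q + 1 + r := by omega
  set e : Fin (q+r+1) ≃ (Fin (q+1) ⊕ Fin r) := (finCongr h).trans finSumFinEquiv.symm with he
  have hval : ∀ γ : Fin (q+1), ((e.symm (Sum.inl γ)) : ℕ) = γ := by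
    intro γ; simp [he]
  have hval2 : ∀ δ : Fin r, ((e.symm (Sum.inr δ)) : ℕ) = q + 1 + δ := by
    intro δ; simp [he]
  have hsucc : ∀ (γ : Fin (q+1)) (x : Fin (q+r)),
      e ((e.symm (Sum.inl γ)).succAbove x) = Sum.map γ.succAbove id (finSumFinEquiv.symm x) := by
    intro γ x
    apply e.symm.injective
    rw [Equiv.symm_apply_apply]
    induction x using Fin.addCases with
    | left x₀ =>
      rw [finSumFinEquiv_symm_apply_castAdd]
      refine Fin.ext ?_
      rw [show Sum.map γ.succAbove id (Sum.inl x₀) = Sum.inl (γ.succAbove x₀) from rfl, hval]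
      rcases lt_or_ge (x₀ : ℕ) (γ : ℕ) with hx | hx
      · rw [Fin.succAbove_of_castSucc_lt _ _ (by simp [Fin.lt_def, hval, hx]),
          Fin.succAbove_of_castSucc_lt _ _ (by simp [Fin.lt_def, hx])]
        simp
      · rw [Fin.succAbove_of_le_castSucc _ _ (by simp [Fin.le_def, hval, hx]),
          Fin.succAbove_of_le_castSucc _ _ (by simp [Fin.le_def, hx])]
        simp
    | right x₁ =>
      rw [finSumFinEquiv_symm_apply_natAdd]
      refine Fin.ext ?_
      rw [show Sum.map γ.succAbove id (Sum.inr x₁) = Sum.inr x₁ from rfl, hval2]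
      rw [Fin.succAbove_of_le_castSucc _ _
        (by simp [Fin.le_def, hval]; omega)]
      simp
      omega
  have hadj : Y.adjugate (Sum.inl β) (Sum.inl α)
      = (Y.submatrix e e).adjugate (e.symm (Sum.inl β)) (e.symm (Sum.inl α)) := by
    rw [adjugate_submatrix_equiv_self]
    simp
  have hcomp : ∀ γ : Fin (q+1), (e ∘ (e.symm (Sum.inl γ)).succAbove)
      = (Sum.map γ.succAbove id) ∘ finSumFinEquiv.symm := fun γ => funext (hsucc γ)
  rw [hadj, adjugate_fin_succ_eq_det_submatrix, hval, hval, submatrix_submatrix,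
    hcomp, hcomp, ← submatrix_submatrix, det_submatrix_equiv_self finSumFinEquiv.symm,
    ← mul_assoc, ← pow_add, Even.neg_one_pow ⟨_, rfl⟩, one_mul]

lemma core {R : Type*} [CommRing R] {q r : ℕ}
    (Y : Matrix (Fin (q+1) ⊕ Fin r) (Fin (q+1) ⊕ Fin r) R) :
    (Matrix.of fun α β : Fin (q+1) =>
        (Y.submatrix (Sum.map α.succAbove id) (Sum.map β.succAbove id)).det).det
      = Y.det ^ q * (Y.submatrix Sum.inr Sum.inr).det := by
  have hC : (Matrix.of fun α β : Fin (q+1) =>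
      (Y.submatrix (Sum.map α.succAbove id) (Sum.map β.succAbove id)).det)
      = diagonal (fun α : Fin (q+1) => (-1:R)^(α:ℕ)) *
        ((Y.adjugate.submatrix Sum.inl Sum.inl)ᵀ *
         diagonal (fun α : Fin (q+1) => (-1:R)^(α:ℕ))) := by
    ext α β
    simp only [of_apply, diagonal_mul, mul_diagonal, transpose_apply, submatrix_apply]
    rw [entry, pow_add]; ring
  rw [hC, det_mul, det_mul, det_transpose, det_diagonal, Finset.prod_pow_eq_pow_sum, jacobi,
    ← mul_assoc, mul_comm ((-1:R) ^ _), mul_assoc, mul_assoc, ← pow_add,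
    Even.neg_one_pow ⟨_, rfl⟩, mul_one]

lemma happend {T : Type*} {a b : ℕ} (u : Fin a → T) (v : Fin b → T) :
    Fin.append u v = Sum.elim u v ∘ finSumFinEquiv.symm := by
  funext x
  induction x using Fin.addCases with
  | left x₀ => simp
  | right x₁ => simp


/-- Dual Sylvester identity: for sequences `J, J'` of length `q ≥ 1` (written `q + 1` below
with exponent `q = (q+1) − 1`),
`det ( det X((J∖(j_α))⊔K ; (J'∖(j'_β))⊔K') )_{α,β}
  = (det X(J⊔K ; J'⊔K'))^{q−1} · det X(K ; K')`. -/
theorem dual_sylvester {R : Type*} [CommRing R] {ι κ : Type*} (X : Matrix ι κ R)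
    {q r : ℕ} (K : Fin r → ι) (K' : Fin r → κ)
    (J : Fin (q + 1) → ι) (J' : Fin (q + 1) → κ) :
    (Matrix.of fun α β : Fin (q + 1) =>
        (X.submatrix (Fin.append (J ∘ α.succAbove) K)
          (Fin.append (J' ∘ β.succAbove) K')).det).det
      = (X.submatrix (Fin.append J K) (Fin.append J' K')).det ^ q *
          (X.submatrix K K').det := by
  set Y := X.submatrix (Sum.elim J K) (Sum.elim J' K') with hYdef
  have h1 : ∀ α β : Fin (q+1),
      (X.submatrix (Fin.append (J ∘ α.succAbove) K) (Fin.append (J' ∘ β.succAbove) K')).det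
        = (Y.submatrix (Sum.map α.succAbove id) (Sum.map β.succAbove id)).det := by
    intro α β
    rw [happend (J ∘ α.succAbove) K, happend (J' ∘ β.succAbove) K',
      show Sum.elim (J ∘ α.succAbove) K = Sum.elim J K ∘ Sum.map α.succAbove id from
        funext (by rintro (x | x) <;> rfl),
      show Sum.elim (J' ∘ β.succAbove) K' = Sum.elim J' K' ∘ Sum.map β.succAbove id from
        funext (by rintro (x | x) <;> rfl),
      show X.submatrix ((Sum.elim J K ∘ Sum.map α.succAbove id) ∘ finSumFinEquiv.symm)
          ((Sum.elim J' K' ∘ Sum.map β.succAbove id) ∘ finSumFinEquiv.symm)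
        = ((Y.submatrix (Sum.map α.succAbove id)
            (Sum.map β.succAbove id)).submatrix finSumFinEquiv.symm finSumFinEquiv.symm) from rfl,
      det_submatrix_equiv_self]
  have h2 : (X.submatrix (Fin.append J K) (Fin.append J' K')).det = Y.det := by
    rw [happend J K, happend J' K',
      show X.submatrix (Sum.elim J K ∘ finSumFinEquiv.symm) (Sum.elim J' K' ∘ finSumFinEquiv.symm)
        = Y.submatrix finSumFinEquiv.symm finSumFinEquiv.symm from rfl,
      det_submatrix_equiv_self]
  have h3 : X.submatrix K K' = Y.submatrix Sum.inr Sum.inr := rfl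
  have hM : (Matrix.of fun α β : Fin (q + 1) =>
      (X.submatrix (Fin.append (J ∘ α.succAbove) K) (Fin.append (J' ∘ β.succAbove) K')).det)
      = Matrix.of fun α β : Fin (q+1) =>
        (Y.submatrix (Sum.map α.succAbove id) (Sum.map β.succAbove id)).det := by
    ext α β; simp only [of_apply]; exact h1 α β
  rw [hM, core, h2, h3]
end

section
/- Let N be an n×n skew-symmetric matrix and M an m×n matrix with m+n even. Then the Pfaffian of the block skew-symmetric matrix [[N, M],[−Mᵀ, O]] equals (−1)^{C(m,2)} det M if m = n, and equals 0 if m > n. -/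
open Matrix Finset

set_option maxHeartbeats 1000000

variable {R : Type*} [CommRing R]

/-- The index `2i` among `Fin n` (for `n` even, `i < n/2`). -/
def pfLo {n : ℕ} (_h : n % 2 = 0) (i : Fin (n / 2)) : Fin n :=
  ⟨2 * i.val, by have := i.isLt; omega⟩

/-- The index `2i+1` among `Fin n` (for `n` even, `i < n/2`). -/
def pfHi {n : ℕ} (_h : n % 2 = 0) (i : Fin (n / 2)) : Fin n :=
  ⟨2 * i.val + 1, by have := i.isLt; omega⟩

/-- The Pfaffian of an `n × n` matrix, as the sum
`∑_{π ∈ F_n} sgn(π) · a_{π(1),π(2)} ⋯ a_{π(n−1),π(n)}` over the set `F_n` of permutations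
satisfying `π(1) < π(3) < ⋯ < π(n−1)` and `π(2i−1) < π(2i)`; it is `0` when `n` is odd. -/
def pf {n : ℕ} (A : Matrix (Fin n) (Fin n) R) : R :=
  if h : n % 2 = 0 then
    ∑ π : Equiv.Perm (Fin n),
      if (∀ i : Fin (n / 2), π (pfLo h i) < π (pfHi h i)) ∧
          (∀ i j : Fin (n / 2), i < j → π (pfLo h i) < π (pfLo h j)) then
        ((Equiv.Perm.sign π : ℤ) : R) * ∏ i : Fin (n / 2), A (π (pfLo h i)) (π (pfHi h i))
      else 0
  else 0

namespace PfAux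

def ilv (n : ℕ) : Fin n ⊕ Fin n ≃ Fin (n + n) where
  toFun x := Sum.elim (fun i : Fin n => (⟨2 * i.val, by omega⟩ : Fin (n + n)))
      (fun i : Fin n => (⟨2 * i.val + 1, by omega⟩ : Fin (n + n))) x
  invFun k := if k.val % 2 = 0 then Sum.inl ⟨k.val / 2, by have := k.isLt; omega⟩
      else Sum.inr ⟨k.val / 2, by have := k.isLt; omega⟩
  left_inv := by
    rintro (i | i) <;> dsimp only <;> simp only [Sum.elim_inl, Sum.elim_inr]
    · simp only [show 2 * i.val % 2 = 0 by omega, ↓reduceIte]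
      exact congrArg Sum.inl (Fin.ext (by simp only [Fin.val_mk]; omega))
    · simp only [show ¬ ((2 * i.val + 1) % 2 = 0) by omega, ↓reduceIte]
      exact congrArg Sum.inr (Fin.ext (by simp only [Fin.val_mk]; omega))
  right_inv := by
    intro k
    dsimp only
    by_cases hk : k.val % 2 = 0
    · rw [if_pos hk]
      exact Fin.ext (show 2 * (k.val / 2) = k.val by omega)
    · rw [if_neg hk]
      exact Fin.ext (show 2 * (k.val / 2) + 1 = k.val by omega)

def shuf (n : ℕ) : Equiv.Perm (Fin (n + n)) := (ilv n).symm.trans finSumFinEquiv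

lemma ilv_symm_apply {n : ℕ} (k : Fin (n + n)) :
    (ilv n).symm k = if k.val % 2 = 0 then Sum.inl ⟨k.val / 2, by have := k.isLt; omega⟩
      else Sum.inr ⟨k.val / 2, by have := k.isLt; omega⟩ := rfl

lemma shuf_apply_val {n : ℕ} (k : Fin (n + n)) :
    (shuf n k).val = if k.val % 2 = 0 then k.val / 2 else n + k.val / 2 := by
  show (finSumFinEquiv ((ilv n).symm k)).val = _
  rw [ilv_symm_apply]
  by_cases hk : k.val % 2 = 0
  · rw [if_pos hk, if_pos hk]; simp
  · rw [if_neg hk, if_neg hk]; simp [Nat.add_comm]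

lemma emb_apply_val {a b c : ℕ} (h : a + b = c) (σ : Equiv.Perm (Fin a)) (ρ : Equiv.Perm (Fin b))
    (x : Fin c) :
    ((Equiv.permCongr (finSumFinEquiv.trans (finCongr h)) (Equiv.sumCongr σ ρ)) x).val =
      if hx : x.val < a then (σ ⟨x.val, hx⟩).val
      else a + (ρ ⟨x.val - a, by omega⟩).val := by
  by_cases hx : x.val < a
  · have hx' : x = (finSumFinEquiv.trans (finCongr h)) (Sum.inl ⟨x.val, hx⟩) := Fin.ext (by simp)
    rw [dif_pos hx]
    conv_lhs => rw [hx']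
    rw [Equiv.permCongr_apply, Equiv.symm_apply_apply]
    simp
  · have hx' : x = (finSumFinEquiv.trans (finCongr h)) (Sum.inr ⟨x.val - a, by omega⟩) :=
      Fin.ext (by simp; omega)
    rw [dif_neg hx]
    conv_lhs => rw [hx']
    rw [Equiv.permCongr_apply, Equiv.symm_apply_apply]
    simp

lemma cr_apply_val (n : ℕ) (j : Fin (n + 2)) :
    ((Fin.cycleRange (⟨n, by omega⟩ : Fin (n + 2))) j).val =
      if j.val < n then j.val + 1 else if j.val = n then 0 else j.val := by
  rcases lt_trichotomy j.val n with hj | hj | hj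
  · rw [if_pos hj, Fin.coe_cycleRange_of_lt (by simp [Fin.lt_def, hj])]
  · rw [if_neg (by omega), if_pos hj, Fin.cycleRange_of_eq (Fin.ext (by simp [hj]))]
    rfl
  · rw [if_neg (by omega), if_neg (by omega),
      Fin.cycleRange_of_gt (by simp [Fin.lt_def]; omega)]

lemma shuf_succ (n : ℕ) :
    shuf (n + 1) =
      (Equiv.permCongr (finSumFinEquiv.trans (finCongr (by omega : n + (n + 2) = (n + 1) + (n + 1))))
          (Equiv.sumCongr (Equiv.refl (Fin n)) (Fin.cycleRange (⟨n, by omega⟩ : Fin (n + 2)))))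
        * (Equiv.permCongr (finSumFinEquiv.trans (finCongr (by omega : (n + n) + 2 = (n + 1) + (n + 1))))
          (Equiv.sumCongr (shuf n) (Equiv.refl (Fin 2)))) := by
  refine Equiv.ext fun x => Fin.ext ?_
  rw [Equiv.Perm.mul_apply, shuf_apply_val, emb_apply_val]
  have hx := x.isLt
  have hC := emb_apply_val (by omega : (n + n) + 2 = (n + 1) + (n + 1)) (shuf n)
    (Equiv.refl (Fin 2)) x
  set y := ((finSumFinEquiv.trans (finCongr (by omega : (n + n) + 2 = (n + 1) + (n + 1)))).permCongr
    (Equiv.sumCongr (shuf n) (Equiv.refl (Fin 2)))) x with hy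
  by_cases h1 : x.val < n + n
  · rw [dif_pos h1, shuf_apply_val] at hC
    simp only [Fin.val_mk] at hC
    by_cases h2 : x.val % 2 = 0
    · rw [if_pos h2] at hC ⊢
      rw [dif_pos (by omega)]
      simp only [Equiv.refl_apply, Fin.val_mk]
      omega
    · rw [if_neg h2] at hC ⊢
      rw [dif_neg (by omega), cr_apply_val]
      simp only [Fin.val_mk]
      rw [if_pos (by omega)]
      omega
  · rw [dif_neg h1] at hC
    simp only [Equiv.refl_apply, Fin.val_mk] at hC
    by_cases h2 : x.val % 2 = 0
    · rw [if_pos h2]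
      rw [dif_neg (by omega), cr_apply_val]
      simp only [Fin.val_mk]
      rw [if_neg (by omega), if_pos (by omega)]
      omega
    · rw [if_neg h2]
      rw [dif_neg (by omega), cr_apply_val]
      simp only [Fin.val_mk]
      rw [if_neg (by omega), if_neg (by omega)]
      omega

lemma sign_shuf : ∀ n, Equiv.Perm.sign (shuf n) = (-1) ^ n.choose 2 := by
  intro n
  induction n with
  | zero =>
      have h0 : shuf 0 = 1 := Equiv.ext fun x => absurd x.isLt (by omega)
      simp [h0]
  | succ n ih =>
      rw [shuf_succ, _root_.map_mul, Equiv.Perm.sign_permCongr, Equiv.Perm.sign_permCongr,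
        Equiv.Perm.sign_sumCongr, Equiv.Perm.sign_sumCongr, Equiv.Perm.sign_refl,
        Equiv.Perm.sign_refl, Fin.sign_cycleRange, ih]
      have h2 : (n + 1).choose 2 = n + n.choose 2 := by
        rw [Nat.choose_succ_succ, Nat.choose_one_right]
      rw [h2, pow_add]
      simp [mul_comm]

def pit {n : ℕ} (τ : Equiv.Perm (Fin n)) : Equiv.Perm (Fin (n + n)) :=
  (ilv n).symm.trans ((Equiv.sumCongr (Equiv.refl (Fin n)) τ).trans finSumFinEquiv)

lemma pit_ilv_inl {n : ℕ} (τ : Equiv.Perm (Fin n)) (i : Fin n) :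
    pit τ (ilv n (Sum.inl i)) = finSumFinEquiv (Sum.inl i) := by
  simp [pit]

lemma pit_ilv_inr {n : ℕ} (τ : Equiv.Perm (Fin n)) (i : Fin n) :
    pit τ (ilv n (Sum.inr i)) = finSumFinEquiv (Sum.inr (τ i)) := by
  simp [pit]

lemma pit_eq_mul {n : ℕ} (τ : Equiv.Perm (Fin n)) :
    pit τ = shuf n * (Equiv.permCongr (ilv n) (Equiv.sumCongr (Equiv.refl (Fin n)) τ)) := by
  refine Equiv.ext fun x => ?_
  simp [pit, shuf, Equiv.permCongr_apply, Equiv.Perm.mul_apply]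

lemma sign_pit {n : ℕ} (τ : Equiv.Perm (Fin n)) :
    Equiv.Perm.sign (pit τ) = (-1) ^ n.choose 2 * Equiv.Perm.sign τ := by
  rw [pit_eq_mul, _root_.map_mul, Equiv.Perm.sign_permCongr, Equiv.Perm.sign_sumCongr,
    Equiv.Perm.sign_refl, one_mul, sign_shuf]

lemma pit_injective {n : ℕ} : Function.Injective (pit (n := n)) := by
  intro τ τ' h
  refine Equiv.ext fun i => ?_
  have h2 := congrArg (fun f : Equiv.Perm (Fin (n + n)) => f (ilv n (Sum.inr i))) h
  simp only [pit_ilv_inr] at h2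
  exact Sum.inr_injective (finSumFinEquiv.injective h2)

lemma fin_strictMono_eq_id {k : ℕ} (f : Fin k → Fin k) (hf : StrictMono f) (i : Fin k) :
    f i = i := by
  have up : ∀ j : ℕ, ∀ i : Fin k, i.val = j → j ≤ (f i).val := by
    intro j
    induction j with
    | zero => intro i _; omega
    | succ j ih =>
      intro i hi
      have hik := i.isLt
      have hj : j < k := by omega
      have h1 : (⟨j, hj⟩ : Fin k) < i := by rw [Fin.lt_def]; simp only [Fin.val_mk]; omega
      have h2 := hf h1
      have h3 := ih ⟨j, hj⟩ rfl
      rw [Fin.lt_def] at h2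
      omega
  have down : ∀ j : ℕ, ∀ i : Fin k, i.val = k - 1 - j → (f i).val ≤ k - 1 - j := by
    intro j
    induction j with
    | zero => intro i _; have := (f i).isLt; omega
    | succ j ih =>
      intro i hi
      have hik := i.isLt
      by_cases hc : k - 1 - (j + 1) < k - 1 - j
      · have hj : k - 1 - j < k := by omega
        have h1 : i < (⟨k - 1 - j, hj⟩ : Fin k) := by
          rw [Fin.lt_def]; simp only [Fin.val_mk]; omega
        have h2 := hf h1
        have h3 := ih ⟨k - 1 - j, hj⟩ rfl
        rw [Fin.lt_def] at h2
        omega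
      · have := ih i (by omega)
        omega
  have hik := i.isLt
  have h1 := up i.val i rfl
  have h2 := down (k - 1 - i.val) i (by omega)
  exact Fin.ext (by omega)

lemma block_rr {m n : ℕ} (N : Matrix (Fin n) (Fin n) R) (M : Matrix (Fin m) (Fin n) R)
    (x y : Fin (n + m)) (hx : n ≤ x.val) (hy : n ≤ y.val) :
    (Matrix.fromBlocks N Mᵀ (-M) 0).submatrix finSumFinEquiv.symm finSumFinEquiv.symm x y
      = 0 := by
  have hx' : x = finSumFinEquiv (Sum.inr ⟨x.val - n, by omega⟩) := Fin.ext (by simp; omega)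
  have hy' : y = finSumFinEquiv (Sum.inr ⟨y.val - n, by omega⟩) := Fin.ext (by simp; omega)
  rw [Matrix.submatrix_apply, hx', hy']
  simp only [Equiv.symm_apply_apply, Matrix.fromBlocks_apply₂₂, Matrix.zero_apply]

lemma block_lr {m n : ℕ} (N : Matrix (Fin n) (Fin n) R) (M : Matrix (Fin m) (Fin n) R)
    (i : Fin n) (j : Fin m) :
    (Matrix.fromBlocks N Mᵀ (-M) 0).submatrix finSumFinEquiv.symm finSumFinEquiv.symm
      (finSumFinEquiv (Sum.inl i)) (finSumFinEquiv (Sum.inr j)) = M j i := by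
  rw [Matrix.submatrix_apply]
  simp only [Equiv.symm_apply_apply, Matrix.fromBlocks_apply₁₂, Matrix.transpose_apply]

end PfAux

open PfAux in
set_option maxHeartbeats 1000000 in
lemma key_lemma {m : ℕ} (p : (m + m) % 2 = 0) (q : (m + m) / 2 = m)
    (N : Matrix (Fin m) (Fin m) R) (M : Matrix (Fin m) (Fin m) R)
    (π : Equiv.Perm (Fin (m + m)))
    (hcond : (∀ i : Fin ((m + m) / 2), π (pfLo p i) < π (pfHi p i)) ∧
         (∀ i j : Fin ((m + m) / 2), i < j → π (pfLo p i) < π (pfLo p j)))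
    (hprod : (∏ i : Fin ((m + m) / 2),
          (Matrix.fromBlocks N Mᵀ (-M) 0).submatrix finSumFinEquiv.symm finSumFinEquiv.symm
            (π (pfLo p i)) (π (pfHi p i))) ≠ 0) :
    ∃ τ : Equiv.Perm (Fin m), π = pit τ := by
  have h1 : ∀ i : Fin ((m + m) / 2),
      ¬(m ≤ (π (pfLo p i)).val ∧ m ≤ (π (pfHi p i)).val) := by
    rintro i ⟨ha, hb⟩
    exact hprod (Finset.prod_eq_zero (Finset.mem_univ i) (block_rr N M _ _ ha hb))
  have hlo : ∀ i : Fin ((m + m) / 2), (π (pfLo p i)).val < m := by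
    intro i
    by_contra hge
    push_neg at hge
    refine h1 i ⟨hge, ?_⟩
    have h2 := hcond.1 i
    rw [Fin.lt_def] at h2
    omega
  have hFinj : Function.Injective
      (fun j : Fin m => (⟨(π (pfLo p (Fin.cast q.symm j))).val, hlo _⟩ : Fin m)) := by
    intro a b hab
    have hv := congrArg Fin.val hab
    simp only [Fin.val_mk] at hv
    have h2 := π.injective (Fin.ext hv)
    have h3 := congrArg Fin.val h2
    simp only [pfLo, Fin.val_mk, Fin.coe_cast] at h3
    exact Fin.ext (by omega)
  have hhi : ∀ i : Fin ((m + m) / 2), m ≤ (π (pfHi p i)).val := by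
    intro i
    by_contra hge
    push_neg at hge
    obtain ⟨j', hj'⟩ := Finite.surjective_of_injective hFinj ⟨(π (pfHi p i)).val, hge⟩
    have hv := congrArg Fin.val hj'
    simp only [Fin.val_mk] at hv
    have h2 := π.injective (Fin.ext hv)
    have h3 := congrArg Fin.val h2
    simp only [pfLo, pfHi, Fin.val_mk] at h3
    omega
  have hloid : ∀ j : Fin m, (π (pfLo p (Fin.cast q.symm j))).val = j.val := by
    have hmono : StrictMono
        (fun j : Fin m => (⟨(π (pfLo p (Fin.cast q.symm j))).val, hlo _⟩ : Fin m)) := by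
      intro a b hab
      have hab' : (Fin.cast q.symm a) < (Fin.cast q.symm b) := by
        rw [Fin.lt_def] at hab ⊢
        simpa using hab
      have h3 := hcond.2 _ _ hab'
      rw [Fin.lt_def] at h3 ⊢
      simpa using h3
    intro j
    have := fin_strictMono_eq_id _ hmono j
    have hv := congrArg Fin.val this
    simpa using hv
  have hbij : Function.Bijective
      (fun j : Fin m => (⟨(π (pfHi p (Fin.cast q.symm j))).val - m, by
        have := (π (pfHi p (Fin.cast q.symm j))).isLt; omega⟩ : Fin m)) := by
    refine Finite.injective_iff_bijective.mp ?_
    intro a b hab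
    have hv := congrArg Fin.val hab
    simp only [Fin.val_mk] at hv
    have ha := hhi (Fin.cast q.symm a)
    have hb := hhi (Fin.cast q.symm b)
    have h2 := π.injective (Fin.ext (show (π (pfHi p (Fin.cast q.symm a))).val
      = (π (pfHi p (Fin.cast q.symm b))).val by omega))
    have h3 := congrArg Fin.val h2
    simp only [pfHi, Fin.val_mk, Fin.coe_cast] at h3
    exact Fin.ext (by omega)
  refine ⟨Equiv.ofBijective _ hbij, ?_⟩
  refine Equiv.ext fun x => ?_
  obtain ⟨y, rfl⟩ := (ilv m).surjective x
  rcases y with j | j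
  · rw [pit_ilv_inl]
    have e1 : ilv m (Sum.inl j) = pfLo p (Fin.cast q.symm j) :=
      Fin.ext (by simp [ilv, pfLo])
    rw [e1]
    refine Fin.ext ?_
    rw [hloid j]
    simp
  · rw [pit_ilv_inr]
    have e1 : ilv m (Sum.inr j) = pfHi p (Fin.cast q.symm j) :=
      Fin.ext (by simp [ilv, pfHi])
    rw [e1]
    refine Fin.ext ?_
    have hge := hhi (Fin.cast q.symm j)
    simp only [Equiv.ofBijective_apply, finSumFinEquiv_apply_right, Fin.coe_natAdd,
      Fin.val_mk]
    omega

open PfAux in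
/-- For an `n × n` skew-symmetric matrix `N` and an `m × n` matrix `M` with `m + n` even,
the Pfaffian of the block skew-symmetric matrix `[[N, M], [−Mᵀ, O]]` (with `O` the `m × m`
zero block, so that the top-right block is the transpose copy of `M`) equals
`(−1)^{C(m,2)} det M` if `m = n`, and `0` if `m > n`. -/
theorem pf_block_skew_diag {m n : ℕ} (hmn : (m + n) % 2 = 0)
    (N : Matrix (Fin n) (Fin n) R) (hN : Nᵀ = -N) (M : Matrix (Fin m) (Fin n) R) :
    (∀ h : m = n,
      pf ((Matrix.fromBlocks N Mᵀ (-M) 0).submatrix finSumFinEquiv.symm finSumFinEquiv.symm)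
        = (-1 : R) ^ m.choose 2 * (M.submatrix (Fin.cast h.symm) id).det) ∧
    (m > n →
      pf ((Matrix.fromBlocks N Mᵀ (-M) 0).submatrix finSumFinEquiv.symm finSumFinEquiv.symm)
        = 0) := by
  constructor
  · -- m = n case
    intro h
    subst h
    have p : (m + m) % 2 = 0 := by omega
    have q : (m + m) / 2 = m := by omega
    have hid : M.submatrix (Fin.cast (Eq.symm rfl)) id = M := by
      rw [show (Fin.cast (Eq.symm (rfl : m = m)) : Fin m → Fin m) = id from funext fun x => rfl]
      exact Matrix.submatrix_id_id M
    rw [hid]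
    simp only [pf]
    rw [dif_pos p]
    -- abbreviation for readability in comments only
    have key := fun π hcond hprod => key_lemma (R := R) p q N M π hcond hprod
    refine Eq.trans (Eq.symm (Finset.sum_subset
      (Finset.subset_univ (Finset.image (fun τ : Equiv.Perm (Fin m) => pit τ)
        Finset.univ)) ?_)) ?_
    · -- terms outside the image vanish
      intro π _ hπ
      by_cases hcond : (∀ i : Fin ((m + m) / 2), π (pfLo p i) < π (pfHi p i)) ∧
          (∀ i j : Fin ((m + m) / 2), i < j → π (pfLo p i) < π (pfLo p j))
      · rw [if_pos hcond]
        by_cases hprod : (∏ i : Fin ((m + m) / 2),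
            (Matrix.fromBlocks N Mᵀ (-M) 0).submatrix finSumFinEquiv.symm finSumFinEquiv.symm
              (π (pfLo p i)) (π (pfHi p i))) = 0
        · rw [hprod, mul_zero]
        · obtain ⟨τ, rfl⟩ := key π hcond hprod
          exact absurd (Finset.mem_image_of_mem _ (Finset.mem_univ τ)) hπ
      · rw [if_neg hcond]
    · rw [Finset.sum_image (fun a _ b _ hab => pit_injective hab)]
      rw [Matrix.det_apply, Finset.mul_sum]
      refine Finset.sum_congr rfl fun τ _ => ?_
      have cond1 : ∀ i : Fin ((m + m) / 2), pit τ (pfLo p i) < pit τ (pfHi p i) := by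
        intro i
        rw [show pfLo p i = ilv m (Sum.inl (Fin.cast q i)) from Fin.ext (by simp [ilv, pfLo]),
          show pfHi p i = ilv m (Sum.inr (Fin.cast q i)) from Fin.ext (by simp [ilv, pfHi]),
          pit_ilv_inl, pit_ilv_inr, Fin.lt_def]
        simp only [finSumFinEquiv_apply_left, finSumFinEquiv_apply_right, Fin.coe_castAdd,
          Fin.coe_natAdd]
        have := (Fin.cast q i).isLt
        omega
      have cond2 : ∀ i j : Fin ((m + m) / 2), i < j →
          pit τ (pfLo p i) < pit τ (pfLo p j) := by
        intro i j hij
        rw [show pfLo p i = ilv m (Sum.inl (Fin.cast q i)) from Fin.ext (by simp [ilv, pfLo]),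
          show pfLo p j = ilv m (Sum.inl (Fin.cast q j)) from Fin.ext (by simp [ilv, pfLo]),
          pit_ilv_inl, pit_ilv_inl, Fin.lt_def]
        simp only [finSumFinEquiv_apply_left, Fin.coe_castAdd, Fin.coe_cast]
        rw [Fin.lt_def] at hij
        exact hij
      rw [if_pos ⟨cond1, cond2⟩]
      have hprodeq : (∏ i : Fin ((m + m) / 2),
          (Matrix.fromBlocks N Mᵀ (-M) 0).submatrix finSumFinEquiv.symm finSumFinEquiv.symm
            (pit τ (pfLo p i)) (pit τ (pfHi p i))) = ∏ j : Fin m, M (τ j) j := by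
        refine Fintype.prod_equiv (finCongr q) _ _ fun i => ?_
        rw [show pfLo p i = ilv m (Sum.inl (Fin.cast q i)) from Fin.ext (by simp [ilv, pfLo]),
          show pfHi p i = ilv m (Sum.inr (Fin.cast q i)) from Fin.ext (by simp [ilv, pfHi]),
          pit_ilv_inl, pit_ilv_inr, block_lr, finCongr_apply]
      rw [hprodeq, sign_pit]
      simp only [Units.val_mul, Units.val_pow_eq_pow_val, Units.val_neg, Units.val_one,
        Int.cast_mul, Int.cast_pow, Int.cast_neg, Int.cast_one, Units.smul_def, zsmul_eq_mul]
      ring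
  · -- m > n case
    intro hgt
    have p' : (n + m) % 2 = 0 := by omega
    simp only [pf]
    rw [dif_pos p']
    refine Finset.sum_eq_zero fun π _ => ?_
    by_cases hcond : (∀ i : Fin ((n + m) / 2), π (pfLo p' i) < π (pfHi p' i)) ∧
        (∀ i j : Fin ((n + m) / 2), i < j → π (pfLo p' i) < π (pfLo p' j))
    · rw [if_pos hcond]
      suffices hzero : (∏ i : Fin ((n + m) / 2),
          (Matrix.fromBlocks N Mᵀ (-M) 0).submatrix finSumFinEquiv.symm finSumFinEquiv.symm
            (π (pfLo p' i)) (π (pfHi p' i))) = 0 by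
        rw [hzero, mul_zero]
      by_contra hne
      have h1 : ∀ i : Fin ((n + m) / 2),
          ¬(n ≤ (π (pfLo p' i)).val ∧ n ≤ (π (pfHi p' i)).val) := by
        rintro i ⟨ha, hb⟩
        exact hne (Finset.prod_eq_zero (Finset.mem_univ i) (block_rr N M _ _ ha hb))
      have hinj : Function.Injective (fun i : Fin ((n + m) / 2) =>
          if hlt : (π (pfLo p' i)).val < n then (⟨(π (pfLo p' i)).val, hlt⟩ : Fin n)
          else ⟨(π (pfHi p' i)).val, by have := h1 i; omega⟩) := by
        intro a b hab
        dsimp only at hab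
        by_cases ha : (π (pfLo p' a)).val < n <;> by_cases hb : (π (pfLo p' b)).val < n
        · rw [dif_pos ha, dif_pos hb] at hab
          have hv := congrArg Fin.val hab
          simp only [Fin.val_mk] at hv
          have h2 := congrArg Fin.val (π.injective (Fin.ext hv))
          simp only [pfLo, Fin.val_mk] at h2
          exact Fin.ext (by omega)
        · rw [dif_pos ha, dif_neg hb] at hab
          have hv := congrArg Fin.val hab
          simp only [Fin.val_mk] at hv
          have h2 := congrArg Fin.val (π.injective (Fin.ext hv))
          simp only [pfLo, pfHi, Fin.val_mk] at h2
          exact Fin.ext (by omega)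
        · rw [dif_neg ha, dif_pos hb] at hab
          have hv := congrArg Fin.val hab
          simp only [Fin.val_mk] at hv
          have h2 := congrArg Fin.val (π.injective (Fin.ext hv))
          simp only [pfLo, pfHi, Fin.val_mk] at h2
          exact Fin.ext (by omega)
        · rw [dif_neg ha, dif_neg hb] at hab
          have hv := congrArg Fin.val hab
          simp only [Fin.val_mk] at hv
          have h2 := congrArg Fin.val (π.injective (Fin.ext hv))
          simp only [pfHi, Fin.val_mk] at h2
          exact Fin.ext (by omega)
      have hcard := Fintype.card_le_of_injective _ hinj
      simp only [Fintype.card_fin] at hcard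
      omega
    · rw [if_neg hcond]
end
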